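/- For every nonnegative integer n, $B_{n,\lambda}^{(c)}(x,y)=\sum_{m=0}^{n}\sum_{k=0}^{m}\sum_{l=0}^{\lfloor k/2\rfloor}\binom{n}{m}\binom{k}{2l}(-1)^l\lambda^{n-k}S_1(m,k)\,b_{n-m}\,B_{k-2l}(x)\,y^{2l}$, expressing the type 2 degenerate cosine-Bernoulli polynomials in terms of the type 2 Bernoulli polynomials, Stirling numbers of the first kind, and Bernoulli numbers of the second kind. -/

import Mathlib

open PowerSeries Finset Complex

/-- The degenerate falling factorial `(x)_{n,λ} = x(x-λ)⋯(x-(n-1)λ)`. -/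
noncomputable def dff (l x : ℂ) (n : ℕ) : ℂ := ∏ j ∈ Finset.range n, (x - j * l)

/-- Exponential generating function of a sequence: `Σ f n * t^n / n!`. -/
noncomputable def egf (f : ℕ → ℂ) : PowerSeries ℂ := PowerSeries.mk fun n => f n / n.factorial

/-- The degenerate exponential `e_λ^x(t) = (1+λt)^{x/λ} = Σ (x)_{n,λ} t^n/n!` as a power series. -/
noncomputable def degExp (l x : ℂ) : PowerSeries ℂ := egf (dff l x)

/-- The degenerate cosine `cos_λ^{(y)}(t) = cos((y/λ) log(1+λt)) = (e_λ^{iy}(t)+e_λ^{-iy}(t))/2`. -/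
noncomputable def degCos (l y : ℂ) : PowerSeries ℂ :=
  PowerSeries.C (R := ℂ) (1/2) * (degExp l (Complex.I * y) + degExp l (-(Complex.I * y)))

/-- The degenerate sine `sin_λ^{(y)}(t) = sin((y/λ) log(1+λt)) = (e_λ^{iy}(t)-e_λ^{-iy}(t))/(2i)`. -/
noncomputable def degSin (l y : ℂ) : PowerSeries ℂ :=
  PowerSeries.C (R := ℂ) (1/(2*Complex.I)) * (degExp l (Complex.I * y) - degExp l (-(Complex.I * y)))

/-- The exponential series `e^{at} = Σ a^n t^n/n!`. -/
noncomputable def expS (a : ℂ) : PowerSeries ℂ := egf (fun n => a ^ n)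

/-- The series of `log(1+t)`. -/
noncomputable def logS : PowerSeries ℂ := PowerSeries.mk fun n => if n = 0 then 0 else (-1)^(n+1) / n

lemma coeff_egf (f : ℕ → ℂ) (n : ℕ) : (PowerSeries.coeff (R := ℂ) n) (egf f) = f n / n.factorial := by
  simp [egf]

lemma egf_mul (f g : ℕ → ℂ) : egf f * egf g
    = egf (fun n => ∑ k ∈ Finset.range (n+1), (n.choose k : ℂ) * f k * g (n-k)) := by
  ext n
  rw [PowerSeries.coeff_mul, coeff_egf, Finset.Nat.sum_antidiagonal_eq_sum_range_succ
    (fun i j => (PowerSeries.coeff (R := ℂ) i) (egf f) * (PowerSeries.coeff (R := ℂ) j) (egf g)) n,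
    Finset.sum_div]
  refine Finset.sum_congr rfl fun k hk => ?_
  rw [coeff_egf, coeff_egf, Nat.cast_choose ℂ (Nat.lt_succ_iff.mp (Finset.mem_range.mp hk))]
  have h1 : (k.factorial : ℂ) ≠ 0 := Nat.cast_ne_zero.mpr (Nat.factorial_ne_zero k)
  have h2 : ((n-k).factorial : ℂ) ≠ 0 := Nat.cast_ne_zero.mpr (Nat.factorial_ne_zero _)
  have h3 : (n.factorial : ℂ) ≠ 0 := Nat.cast_ne_zero.mpr (Nat.factorial_ne_zero n)
  field_simp

lemma egf_add (f g : ℕ → ℂ) : egf f + egf g = egf (fun n => f n + g n) := by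
  ext n; simp [coeff_egf, add_div]

lemma egf_sub (f g : ℕ → ℂ) : egf f - egf g = egf (fun n => f n - g n) := by
  ext n; simp [coeff_egf, sub_div]

lemma X_mul_egf (f : ℕ → ℂ) : PowerSeries.X * egf f = egf (fun n => n * f (n-1)) := by
  ext n
  cases n with
  | zero => simp [coeff_egf]
  | succ m =>
      rw [PowerSeries.coeff_succ_X_mul, coeff_egf, coeff_egf]
      have h3 : ((m+1).factorial : ℂ) ≠ 0 := Nat.cast_ne_zero.mpr (Nat.factorial_ne_zero _)
      have h1 : (m.factorial : ℂ) ≠ 0 := Nat.cast_ne_zero.mpr (Nat.factorial_ne_zero m)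
      simp only [Nat.add_sub_cancel, Nat.factorial_succ, Nat.cast_mul]
      rw [mul_div_mul_left _ _ (by exact_mod_cast Nat.succ_ne_zero m : ((m+1 : ℕ) : ℂ) ≠ 0)]

lemma egf_inj {f g : ℕ → ℂ} (h : egf f = egf g) : f = g := by
  funext n
  have := congrArg (PowerSeries.coeff (R := ℂ) n) h
  rw [coeff_egf, coeff_egf, div_eq_div_iff (Nat.cast_ne_zero.mpr (Nat.factorial_ne_zero n))
    (Nat.cast_ne_zero.mpr (Nat.factorial_ne_zero n))] at this
  exact mul_right_cancel₀ (Nat.cast_ne_zero.mpr (Nat.factorial_ne_zero n)) this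

lemma logS_eq : logS = PowerSeries.X * PowerSeries.mk (fun n => (-1)^n / (n+1) : ℕ → ℂ) := by
  ext n
  cases n with
  | zero => simp [logS]
  | succ m =>
      rw [PowerSeries.coeff_succ_X_mul, PowerSeries.coeff_mk]
      simp only [logS, PowerSeries.coeff_mk, Nat.succ_ne_zero, if_false]
      push_cast
      rw [pow_succ, pow_succ]
      ring

section S1facts
variable {S1 : ℕ → ℕ → ℂ}
  (hS1 : ∀ j, logS ^ j = PowerSeries.C (R := ℂ) (Nat.factorial j) * egf (fun k => S1 k j))

include hS1

lemma coeff_logS_pow (m k : ℕ) :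
    (PowerSeries.coeff (R := ℂ) m) (logS ^ k) = (k.factorial : ℂ) * S1 m k / m.factorial := by
  rw [hS1 k, PowerSeries.coeff_C_mul, coeff_egf, mul_div_assoc]

lemma S1_vanish {m k : ℕ} (h : m < k) : S1 m k = 0 := by
  have hd : (PowerSeries.X : PowerSeries ℂ) ^ k ∣ logS ^ k :=
    pow_dvd_pow_of_dvd ⟨_, logS_eq⟩ k
  have := (PowerSeries.X_pow_dvd_iff.mp hd) m h
  rw [coeff_logS_pow hS1] at this
  have h1 : (k.factorial : ℂ) ≠ 0 := Nat.cast_ne_zero.mpr (Nat.factorial_ne_zero k)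
  have h3 : (m.factorial : ℂ) ≠ 0 := Nat.cast_ne_zero.mpr (Nat.factorial_ne_zero m)
  field_simp at this
  exact (mul_eq_zero.mp (this.trans (mul_zero _))).resolve_left h1

lemma S1_diag (k : ℕ) : S1 k k = 1 := by
  have h : (PowerSeries.coeff (R := ℂ) k) (logS ^ k) = 1 := by
    rw [logS_eq, mul_pow, PowerSeries.coeff_X_pow_mul' _ k k, if_pos (le_refl k), Nat.sub_self,
      PowerSeries.coeff_zero_eq_constantCoeff, map_pow]
    simp
  rw [coeff_logS_pow hS1] at h
  have h1 : (k.factorial : ℂ) ≠ 0 := Nat.cast_ne_zero.mpr (Nat.factorial_ne_zero k)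
  field_simp at h
  exact h

lemma S1_zero_right (m : ℕ) : S1 m 0 = if m = 0 then 1 else 0 := by
  have h : (PowerSeries.coeff (R := ℂ) m) (logS ^ 0) = S1 m 0 / m.factorial := by
    rw [coeff_logS_pow hS1]; simp
  rw [pow_zero, PowerSeries.coeff_one] at h
  have h3 : (m.factorial : ℂ) ≠ 0 := Nat.cast_ne_zero.mpr (Nat.factorial_ne_zero m)
  cases m with
  | zero => simpa using h.symm
  | succ p =>
      simp only [Nat.succ_ne_zero, if_false] at h ⊢
      field_simp at h
      exact h.symm.trans (zero_mul _)

end S1facts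

lemma dlogS : (PowerSeries.derivative ℂ) logS = PowerSeries.mk (fun n => (-1)^n : ℕ → ℂ) := by
  ext n
  rw [PowerSeries.coeff_derivative, PowerSeries.coeff_mk]
  simp only [logS, PowerSeries.coeff_mk, Nat.succ_ne_zero, if_false]
  push_cast
  rw [pow_succ, pow_succ]
  have h : ((n : ℂ) + 1) ≠ 0 := by exact_mod_cast Nat.succ_ne_zero n
  field_simp

lemma one_add_X_mul_dlogS : (1 + PowerSeries.X) * (PowerSeries.derivative ℂ) logS = 1 := by
  rw [dlogS]
  ext n
  cases n with
  | zero =>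
      simp [PowerSeries.coeff_mul, Finset.Nat.antidiagonal_zero]
  | succ m =>
      rw [add_mul, one_mul, map_add, PowerSeries.coeff_succ_X_mul, PowerSeries.coeff_mk,
        PowerSeries.coeff_mk, PowerSeries.coeff_one]
      simp [pow_succ]

lemma coeff_X_mul_deriv (F : PowerSeries ℂ) (m : ℕ) :
    (PowerSeries.coeff (R := ℂ) m) (PowerSeries.X * (PowerSeries.derivative ℂ) F)
      = m * (PowerSeries.coeff (R := ℂ) m) F := by
  cases m with
  | zero => simp
  | succ p => rw [PowerSeries.coeff_succ_X_mul, PowerSeries.coeff_derivative]; push_cast; ring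

section S1rec
variable {S1 : ℕ → ℕ → ℂ}
  (hS1 : ∀ j, logS ^ j = PowerSeries.C (R := ℂ) (Nat.factorial j) * egf (fun k => S1 k j))

include hS1

lemma S1_rec (m j : ℕ) : S1 (m+1) (j+1) = S1 m j - m * S1 m (j+1) := by
  have hD : (1 + PowerSeries.X) * (PowerSeries.derivative ℂ) (logS ^ (j+1))
      = PowerSeries.C (R := ℂ) ((j:ℂ)+1) * logS ^ j := by
    rw [Derivation.leibniz_pow, Nat.add_sub_cancel, smul_eq_mul, nsmul_eq_mul]
    have hc : ((j+1 : ℕ) : PowerSeries ℂ) = PowerSeries.C (R := ℂ) ((j:ℂ)+1) := by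
      rw [← map_natCast (PowerSeries.C (R := ℂ)) (j+1)]; push_cast; ring_nf
    rw [hc]
    linear_combination PowerSeries.C (R := ℂ) ((j:ℂ)+1) * logS ^ j * one_add_X_mul_dlogS
  have h := congrArg (PowerSeries.coeff (R := ℂ) m) hD
  rw [add_mul, one_mul, map_add, coeff_X_mul_deriv, PowerSeries.coeff_derivative, PowerSeries.coeff_C_mul, coeff_logS_pow hS1,
    coeff_logS_pow hS1, coeff_logS_pow hS1] at h
  have hm : ((m.factorial : ℂ)) ≠ 0 := Nat.cast_ne_zero.mpr (Nat.factorial_ne_zero _)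
  have hm1 : (((m+1).factorial : ℂ)) ≠ 0 := Nat.cast_ne_zero.mpr (Nat.factorial_ne_zero _)
  have hj : ((j.factorial : ℂ)) ≠ 0 := Nat.cast_ne_zero.mpr (Nat.factorial_ne_zero _)
  have hj1 : (((j+1).factorial : ℂ)) ≠ 0 := Nat.cast_ne_zero.mpr (Nat.factorial_ne_zero _)
  rw [Nat.factorial_succ (m), Nat.factorial_succ (j)] at h
  push_cast at h
  have hmc : ((m : ℂ) + 1) ≠ 0 := by exact_mod_cast Nat.succ_ne_zero m
  field_simp at h
  have hjc : ((j : ℂ) + 1) ≠ 0 := by exact_mod_cast Nat.succ_ne_zero j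
  have key : (((j:ℂ)+1) * (j.factorial : ℂ) * ((m:ℂ)+1) * (m.factorial : ℂ) * (m.factorial : ℂ))
      * (S1 (m+1) (j+1) - (S1 m j - m * S1 m (j+1))) = 0 := by
    linear_combination (((j:ℂ)+1) * (j.factorial : ℂ) * ((m:ℂ)+1) * (m.factorial : ℂ) * (m.factorial : ℂ)) * h
  have hne : (((j:ℂ)+1) * (j.factorial : ℂ) * ((m:ℂ)+1) * (m.factorial : ℂ) * (m.factorial : ℂ)) ≠ 0 :=
    mul_ne_zero (mul_ne_zero (mul_ne_zero (mul_ne_zero hjc hj) hmc) hm) hm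
  have := (mul_eq_zero.mp key).resolve_left hne
  exact sub_eq_zero.mp this

end S1rec

section dffeq
variable {S1 : ℕ → ℕ → ℂ}
  (hS1 : ∀ j, logS ^ j = PowerSeries.C (R := ℂ) (Nat.factorial j) * egf (fun k => S1 k j))
include hS1

lemma dff_eq (l a : ℂ) (m : ℕ) :
    dff l a m = ∑ k ∈ Finset.range (m+1), l^(m-k) * S1 m k * a^k := by
  induction m with
  | zero => simp [dff, S1_diag hS1]
  | succ m ih =>
      have hstep : dff l a (m+1) = dff l a m * (a - m*l) := by
        rw [dff, dff, Finset.prod_range_succ]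
      rw [hstep, ih, Finset.sum_range_succ' (fun k => l^(m+1-k) * S1 (m+1) k * a^k) (m+1)]
      have h0 : S1 (m+1) 0 = 0 := by rw [S1_zero_right hS1]; simp
      rw [h0]
      have hR : ∀ k ∈ Finset.range (m+1), l^(m+1-(k+1)) * S1 (m+1) (k+1) * a^(k+1)
          = l^(m-k) * S1 m k * a^k * a - (m : ℂ) * (l^(m-k) * S1 m (k+1) * a^(k+1)) := by
        intro k hk
        rw [Nat.succ_sub_succ, S1_rec hS1]
        ring
      rw [Finset.sum_congr rfl hR, Finset.sum_sub_distrib, ← Finset.sum_mul, ← Finset.mul_sum]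
      have hM : (m : ℂ) * ∑ k ∈ Finset.range (m+1), l^(m-k) * S1 m (k+1) * a^(k+1)
          = (∑ k ∈ Finset.range (m+1), l^(m-k) * S1 m k * a^k) * ((m:ℂ) * l) := by
        rw [Finset.mul_sum, Finset.sum_mul, Finset.sum_range_succ, S1_vanish hS1 (Nat.lt_succ_self m),
          Finset.sum_range_succ' (fun k => l^(m-k) * S1 m k * a^k * ((m:ℂ)*l)) m]
        have hterm : ∀ k ∈ Finset.range m, (m:ℂ) * (l^(m-k) * S1 m (k+1) * a^(k+1))
            = l^(m-(k+1)) * S1 m (k+1) * a^(k+1) * ((m:ℂ)*l) := by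
          intro k hk
          have hkm : k < m := Finset.mem_range.mp hk
          have : l^(m-(k+1)) * l = l^(m-k) := by
            rw [← pow_succ, ← Nat.sub_add_comm hkm]
            congr 1
            omega
          rw [← this]
          ring
        rw [Finset.sum_congr rfl hterm]
        have hlast : l^(m-0) * S1 m 0 * a^0 * ((m:ℂ)*l) = 0 := by
          cases m with
          | zero => simp
          | succ p => rw [S1_zero_right hS1]; simp
        rw [hlast]
        simp
      linear_combination hM

end dffeq

noncomputable def Lser (l : ℂ) : PowerSeries ℂ :=
  PowerSeries.mk fun n => if n = 0 then 0 else l^(n-1) * ((-1)^(n+1) / n)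

lemma Lser_zero : Lser 0 = PowerSeries.X := by
  ext n
  rw [Lser, PowerSeries.coeff_mk, PowerSeries.coeff_X]
  rcases n with _ | _ | p <;> simp

lemma C_mul_Lser (l : ℂ) :
    PowerSeries.C (R := ℂ) l * Lser l = PowerSeries.rescale l logS := by
  ext n
  rw [PowerSeries.coeff_C_mul, PowerSeries.coeff_rescale]
  cases n with
  | zero => simp [logS, Lser]
  | succ p =>
      simp only [logS, Lser, PowerSeries.coeff_mk, Nat.succ_ne_zero, if_false,
        Nat.add_sub_cancel]
      rw [pow_succ']
      ring

section Lpow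
variable {S1 : ℕ → ℕ → ℂ}
  (hS1 : ∀ j, logS ^ j = PowerSeries.C (R := ℂ) (Nat.factorial j) * egf (fun k => S1 k j))
include hS1

lemma coeff_Lser_pow (l : ℂ) (k m : ℕ) :
    (PowerSeries.coeff (R := ℂ) m) ((Lser l) ^ k) = l^(m-k) * ((k.factorial : ℂ) * S1 m k / m.factorial) := by
  rcases eq_or_ne l 0 with rfl | hl
  · rw [Lser_zero, PowerSeries.coeff_X_pow]
    rcases lt_trichotomy m k with h | rfl | h
    · rw [if_neg (by omega), S1_vanish hS1 h]
      simp
    · rw [if_pos rfl, Nat.sub_self, S1_diag hS1]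
      have : (m.factorial : ℂ) ≠ 0 := Nat.cast_ne_zero.mpr (Nat.factorial_ne_zero _)
      field_simp
    · rw [if_neg (by omega), zero_pow (by omega : m - k ≠ 0)]
      ring
  · have h0 : (PowerSeries.C (R := ℂ) (l^k)) * (Lser l)^k = PowerSeries.rescale l (logS ^ k) := by
      rw [map_pow, map_pow, ← mul_pow, C_mul_Lser]
    have h := congrArg (PowerSeries.coeff (R := ℂ) m) h0
    rw [PowerSeries.coeff_C_mul, PowerSeries.coeff_rescale, coeff_logS_pow hS1] at h
    rcases le_or_gt k m with hkm | hkm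
    · refine mul_left_cancel₀ (pow_ne_zero k hl) ?_
      rw [h, ← mul_assoc, ← pow_add, Nat.add_sub_cancel' hkm]
    · rw [S1_vanish hS1 hkm] at h ⊢
      have hcz : (PowerSeries.coeff (R := ℂ) m) ((Lser l)^k) = 0 := by
        have hk : l ^ k ≠ 0 := pow_ne_zero k hl
        simp only [mul_zero, zero_div, mul_eq_zero] at h
        exact h.resolve_left hk
      rw [hcz]
      ring

end Lpow

noncomputable def Tf (l : ℂ) (S1 : ℕ → ℕ → ℂ) (f : ℕ → ℂ) : ℕ → ℂ :=
  fun m => ∑ k ∈ Finset.range (m+1), l^(m-k) * S1 m k * f k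

noncomputable def Phi (l : ℂ) (S1 : ℕ → ℕ → ℂ) (f : ℕ → ℂ) : PowerSeries ℂ :=
  egf (Tf l S1 f)

section Phi
variable {S1 : ℕ → ℕ → ℂ}
  (hS1 : ∀ j, logS ^ j = PowerSeries.C (R := ℂ) (Nat.factorial j) * egf (fun k => S1 k j))
include hS1

lemma coeff_Phi (l : ℂ) (f : ℕ → ℂ) {m N : ℕ} (h : m < N) :
    (PowerSeries.coeff (R := ℂ) m) (Phi l S1 f)
      = ∑ k ∈ Finset.range N, f k / k.factorial * (PowerSeries.coeff (R := ℂ) m) ((Lser l)^k) := by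
  rw [Phi, coeff_egf, Tf, Finset.sum_div]
  rw [← Finset.sum_subset (Finset.range_subset_range.mpr h)
    (fun k _ hk => by
      rw [coeff_Lser_pow hS1, S1_vanish hS1 (by simpa using hk)]
      simp)]
  refine Finset.sum_congr rfl fun k hk => ?_
  rw [coeff_Lser_pow hS1]
  have h1 : (k.factorial : ℂ) ≠ 0 := Nat.cast_ne_zero.mpr (Nat.factorial_ne_zero k)
  have h3 : (m.factorial : ℂ) ≠ 0 := Nat.cast_ne_zero.mpr (Nat.factorial_ne_zero m)
  rw [div_eq_iff h3]
  field_simp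

lemma Phi_mul (l : ℂ) (f g : ℕ → ℂ) :
    Phi l S1 f * Phi l S1 g
      = Phi l S1 (fun n => ∑ k ∈ Finset.range (n+1), (n.choose k : ℂ) * f k * g (n-k)) := by
  ext n
  set F : ℕ → ℕ → ℂ := fun i j =>
    f i * g j / (i.factorial * j.factorial) * (PowerSeries.coeff (R := ℂ) n) ((Lser l)^(i+j)) with hF
  have hF0 : ∀ i j : ℕ, n < i + j → F i j = 0 := by
    intro i j hij
    rw [hF]
    simp only
    rw [coeff_Lser_pow hS1, S1_vanish hS1 hij]
    simp
  have hLHS : (PowerSeries.coeff (R := ℂ) n) (Phi l S1 f * Phi l S1 g)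
      = ∑ i ∈ Finset.range (n+1), ∑ j ∈ Finset.range (n+1), F i j := by
    rw [PowerSeries.coeff_mul]
    have h1 : ∀ p ∈ Finset.HasAntidiagonal.antidiagonal n,
        (PowerSeries.coeff (R := ℂ) p.1) (Phi l S1 f) * (PowerSeries.coeff (R := ℂ) p.2) (Phi l S1 g)
        = ∑ i ∈ Finset.range (n+1), ∑ j ∈ Finset.range (n+1),
            (f i / i.factorial * (PowerSeries.coeff (R := ℂ) p.1) ((Lser l)^i))
            * (g j / j.factorial * (PowerSeries.coeff (R := ℂ) p.2) ((Lser l)^j)) := by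
      intro p hp
      have hp' := Finset.HasAntidiagonal.mem_antidiagonal.mp hp
      rw [coeff_Phi hS1 l f (by omega : p.1 < n+1), coeff_Phi hS1 l g (by omega : p.2 < n+1),
        Finset.sum_mul_sum]
    rw [Finset.sum_congr rfl h1, Finset.sum_comm]
    refine Finset.sum_congr rfl fun i _ => ?_
    rw [Finset.sum_comm]
    refine Finset.sum_congr rfl fun j _ => ?_
    have h2 : ∀ p ∈ Finset.HasAntidiagonal.antidiagonal n,
        (f i / i.factorial * (PowerSeries.coeff (R := ℂ) p.1) ((Lser l)^i))
        * (g j / j.factorial * (PowerSeries.coeff (R := ℂ) p.2) ((Lser l)^j))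
        = (f i * g j / (i.factorial * j.factorial)) *
            ((PowerSeries.coeff (R := ℂ) p.1) ((Lser l)^i) * (PowerSeries.coeff (R := ℂ) p.2) ((Lser l)^j)) := by
      intro p _
      ring
    rw [Finset.sum_congr rfl h2, ← Finset.mul_sum, ← PowerSeries.coeff_mul, ← pow_add]
  have hRHS : (PowerSeries.coeff (R := ℂ) n)
      (Phi l S1 (fun n => ∑ k ∈ Finset.range (n+1), (n.choose k : ℂ) * f k * g (n-k)))
      = ∑ k ∈ Finset.range (n+1), ∑ i ∈ Finset.range (k+1), F i (k-i) := by
    rw [coeff_Phi hS1 _ _ (Nat.lt_succ_self n)]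
    refine Finset.sum_congr rfl fun k _ => ?_
    rw [Finset.sum_div, Finset.sum_mul]
    refine Finset.sum_congr rfl fun i hi => ?_
    have hik : i ≤ k := Nat.lt_succ_iff.mp (Finset.mem_range.mp hi)
    rw [hF]
    simp only
    rw [Nat.add_sub_cancel' hik, Nat.cast_choose ℂ hik]
    have h1 : (i.factorial : ℂ) ≠ 0 := Nat.cast_ne_zero.mpr (Nat.factorial_ne_zero _)
    have h2 : ((k-i).factorial : ℂ) ≠ 0 := Nat.cast_ne_zero.mpr (Nat.factorial_ne_zero _)
    have h3 : (k.factorial : ℂ) ≠ 0 := Nat.cast_ne_zero.mpr (Nat.factorial_ne_zero _)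
    field_simp
  rw [hLHS, hRHS]
  -- both equal the sum over the triangle {(i,j) : i+j ≤ n}
  have hsq : ∑ i ∈ Finset.range (n+1), ∑ j ∈ Finset.range (n+1), F i j
      = ∑ p ∈ (Finset.range (n+1) ×ˢ Finset.range (n+1)), F p.1 p.2 := by
    rw [Finset.sum_product]
  have htri : ∑ p ∈ (Finset.range (n+1) ×ˢ Finset.range (n+1)).filter
        (fun p => p.1 + p.2 ≤ n), F p.1 p.2
      = ∑ p ∈ (Finset.range (n+1) ×ˢ Finset.range (n+1)), F p.1 p.2 := by
    refine Finset.sum_filter_of_ne fun p _ hne => ?_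
    by_contra hgt
    exact hne (hF0 p.1 p.2 (by omega))
  have hbi : (Finset.range (n+1)).biUnion (fun k => Finset.HasAntidiagonal.antidiagonal k)
      = (Finset.range (n+1) ×ˢ Finset.range (n+1)).filter (fun p => p.1 + p.2 ≤ n) := by
    ext p
    simp only [Finset.mem_biUnion, Finset.mem_range, Finset.HasAntidiagonal.mem_antidiagonal,
      Finset.mem_filter, Finset.mem_product]
    constructor
    · rintro ⟨k, hk, rfl⟩
      omega
    · intro ⟨⟨_, _⟩, hle⟩
      exact ⟨p.1 + p.2, by omega, rfl⟩
  have htr : ∑ k ∈ Finset.range (n+1), ∑ i ∈ Finset.range (k+1), F i (k-i)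
      = ∑ p ∈ (Finset.range (n+1)).biUnion (fun k => Finset.HasAntidiagonal.antidiagonal k), F p.1 p.2 := by
    rw [Finset.sum_biUnion]
    · refine Finset.sum_congr rfl fun k _ => ?_
      rw [← Finset.Nat.sum_antidiagonal_eq_sum_range_succ (fun i j => F i j) k]
    · intro a _ b _ hab
      simp only [Finset.disjoint_left, Finset.HasAntidiagonal.mem_antidiagonal]
      intro p hp hp'
      exact hab (by omega)
  rw [hsq, ← htri, ← hbi, htr]

lemma Phi_add (l : ℂ) (f g : ℕ → ℂ) :
    Phi l S1 (fun n => f n + g n) = Phi l S1 f + Phi l S1 g := by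
  ext m
  simp only [Phi, coeff_egf, Tf, map_add]
  have h : ∀ k ∈ Finset.range (m+1), l^(m-k) * S1 m k * (f k + g k)
      = l^(m-k) * S1 m k * f k + l^(m-k) * S1 m k * g k := fun k _ => by ring
  rw [Finset.sum_congr rfl h, Finset.sum_add_distrib, add_div]

lemma Phi_sub (l : ℂ) (f g : ℕ → ℂ) :
    Phi l S1 (fun n => f n - g n) = Phi l S1 f - Phi l S1 g := by
  ext m
  simp only [Phi, coeff_egf, Tf, map_sub]
  have h : ∀ k ∈ Finset.range (m+1), l^(m-k) * S1 m k * (f k - g k)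
      = l^(m-k) * S1 m k * f k - l^(m-k) * S1 m k * g k := fun k _ => by ring
  rw [Finset.sum_congr rfl h, Finset.sum_sub_distrib, sub_div]

lemma Phi_smul (l c : ℂ) (f : ℕ → ℂ) :
    Phi l S1 (fun n => c * f n) = PowerSeries.C (R := ℂ) c * Phi l S1 f := by
  ext m
  simp only [Phi, coeff_egf, Tf, PowerSeries.coeff_C_mul]
  have h : ∀ k ∈ Finset.range (m+1), l^(m-k) * S1 m k * (c * f k)
      = c * (l^(m-k) * S1 m k * f k) := fun k _ => by ring
  rw [Finset.sum_congr rfl h, ← Finset.mul_sum, mul_div_assoc]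

lemma Phi_shift (l : ℂ) (f : ℕ → ℂ) :
    Phi l S1 (fun n => n * f (n-1)) = Lser l * Phi l S1 f := by
  ext n
  rw [coeff_Phi hS1 _ _ (Nat.lt_succ_of_lt (Nat.lt_succ_self n)), PowerSeries.coeff_mul]
  have h1 : ∀ p ∈ Finset.HasAntidiagonal.antidiagonal n,
      (PowerSeries.coeff (R := ℂ) p.1) (Lser l) * (PowerSeries.coeff (R := ℂ) p.2) (Phi l S1 f)
      = ∑ k ∈ Finset.range (n+1), f k / k.factorial *
          ((PowerSeries.coeff (R := ℂ) p.1) (Lser l) * (PowerSeries.coeff (R := ℂ) p.2) ((Lser l)^k)) := by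
    intro p hp
    have hp' := Finset.HasAntidiagonal.mem_antidiagonal.mp hp
    rw [coeff_Phi hS1 l f (by omega : p.2 < n+1), Finset.mul_sum]
    exact Finset.sum_congr rfl fun k _ => by ring
  rw [Finset.sum_congr rfl h1, Finset.sum_comm]
  rw [Finset.sum_range_succ' (fun k => (k : ℂ) * f (k-1) / k.factorial
      * (PowerSeries.coeff (R := ℂ) n) ((Lser l)^k)) (n+1)]
  simp only [Nat.cast_zero, zero_mul, zero_div, Nat.factorial_zero, Nat.cast_one, mul_zero,
    zero_mul, add_zero]
  refine Finset.sum_congr rfl fun k _ => ?_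
  rw [← Finset.mul_sum, ← PowerSeries.coeff_mul, ← pow_succ']
  congr 1
  rw [Nat.add_sub_cancel, Nat.factorial_succ]
  have hk1 : (((k+1) * k.factorial : ℕ) : ℂ) ≠ 0 :=
    Nat.cast_ne_zero.mpr (Nat.mul_ne_zero (Nat.succ_ne_zero k) (Nat.factorial_ne_zero k))
  have hk2 : ((k.factorial : ℕ) : ℂ) ≠ 0 := Nat.cast_ne_zero.mpr (Nat.factorial_ne_zero k)
  rw [div_eq_div_iff hk1 hk2]
  push_cast
  ring

end Phi

section Main
variable {S1 : ℕ → ℕ → ℂ}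
  (hS1 : ∀ j, logS ^ j = PowerSeries.C (R := ℂ) (Nat.factorial j) * egf (fun k => S1 k j))
include hS1

lemma Phi_pow (l a : ℂ) : Phi l S1 (fun k => a^k) = degExp l a := by
  ext m
  rw [Phi, degExp, coeff_egf, coeff_egf, dff_eq hS1 l a m]
  rfl

omit hS1 in
lemma b_fact {b : ℕ → ℂ} (hb : egf b * logS = PowerSeries.X) (l : ℂ) :
    egf (fun n => l^n * b n) * Lser l = PowerSeries.X := by
  have hb0 : b 0 = 1 := by
    have h := congrArg (PowerSeries.coeff (R := ℂ) 1) hb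
    rw [PowerSeries.coeff_mul, Finset.Nat.sum_antidiagonal_eq_sum_range_succ
      (fun i j => (PowerSeries.coeff (R := ℂ) i) (egf b) * (PowerSeries.coeff (R := ℂ) j) logS) 1,
      Finset.sum_range_succ, Finset.sum_range_succ, Finset.sum_range_zero] at h
    simpa [coeff_egf, logS] using h
  rcases eq_or_ne l 0 with rfl | hl
  · rw [Lser_zero]
    have h0 : egf (fun n => (0:ℂ)^n * b n) = 1 := by
      ext n
      cases n with
      | zero => simp [coeff_egf, hb0]
      | succ p => simp [coeff_egf, PowerSeries.coeff_one]
    rw [h0, one_mul]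
  · have h := congrArg (PowerSeries.rescale l) hb
    rw [map_mul, PowerSeries.rescale_X, ← C_mul_Lser] at h
    have h2 : PowerSeries.rescale l (egf b) = egf (fun n => l^n * b n) := by
      ext n
      rw [PowerSeries.coeff_rescale, coeff_egf, coeff_egf, mul_div_assoc]
    rw [h2] at h
    have hC : PowerSeries.C (R := ℂ) l ≠ 0 := fun hc => hl (by
      have := congrArg (PowerSeries.constantCoeff (R := ℂ)) hc
      simpa using this)
    refine mul_left_cancel₀ hC ?_
    rw [← h]
    ring

lemma key1 {B : ℕ → ℂ} {x : ℂ} (l : ℂ)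
    (hB : egf B * (expS (1/2) - expS (-(1/2))) = PowerSeries.X * expS x) :
    Phi l S1 B * (degExp l (1/2) - degExp l (-(1/2))) = Lser l * degExp l x := by
  set σ : ℕ → ℂ := fun k => (1/2:ℂ)^k - (-(1/2):ℂ)^k with hσ
  have hseq : (fun n => ∑ k ∈ Finset.range (n+1), (n.choose k : ℂ) * B k * σ (n-k))
      = (fun n : ℕ => (n:ℂ) * x^(n-1)) := by
    apply egf_inj
    rw [← egf_mul, ← X_mul_egf]
    have : egf σ = expS (1/2) - expS (-(1/2)) := by
      rw [expS, expS, egf_sub]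
    rw [this, hB, expS]
  have hD : degExp l (1/2) - degExp l (-(1/2)) = Phi l S1 σ := by
    rw [← Phi_pow hS1 l (1/2:ℂ), ← Phi_pow hS1 l (-(1/2):ℂ), ← Phi_sub hS1]
  have hx : degExp l x = Phi l S1 (fun k => x^k) := (Phi_pow hS1 l x).symm
  rw [hD, hx, Phi_mul hS1 l B σ, hseq]
  exact Phi_shift hS1 l (fun k => x^k)

lemma degCos_eq (l y : ℂ) :
    degCos l y = Phi l S1 (fun k => (1/2:ℂ) * ((Complex.I*y)^k + (-(Complex.I*y))^k)) := by
  rw [degCos, Phi_smul hS1]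
  congr 1
  have hadd := Phi_add hS1 l (fun k => (Complex.I*y)^k) (fun k => (-(Complex.I*y))^k)
  rw [Phi_pow hS1, Phi_pow hS1] at hadd
  exact hadd.symm

end Main

lemma even_sum_reindex (k : ℕ) (F : ℕ → ℂ) (hodd : ∀ j, ¬ Even j → F j = 0) :
    ∑ j ∈ Finset.range (k+1), F j = ∑ l ∈ Finset.range (k/2+1), F (2*l) := by
  rw [← Finset.sum_filter_of_ne (fun j _ hne => by
    by_contra ho
    exact hne (hodd j ho))]
  refine Finset.sum_bij' (fun j _ => j / 2) (fun l _ => 2 * l) ?_ ?_ ?_ ?_ ?_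
  · intro j hj
    simp only [Finset.mem_filter, Finset.mem_range] at hj
    simp only [Finset.mem_range]
    omega
  · intro l hl
    simp only [Finset.mem_range] at hl
    simp only [Finset.mem_filter, Finset.mem_range]
    exact ⟨by omega, ⟨l, by omega⟩⟩
  · intro j hj
    simp only [Finset.mem_filter, Finset.mem_range] at hj
    obtain ⟨t, ht⟩ := hj.2
    show 2 * (j / 2) = j
    omega
  · intro l hl
    show 2 * l / 2 = l
    omega
  · intro j hj
    simp only [Finset.mem_filter, Finset.mem_range] at hj
    obtain ⟨t, ht⟩ := hj.2
    show F j = F (2 * (j / 2))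
    congr 1
    omega

theorem stmt18 (lam x y : ℝ) (Bc B b : ℕ → ℂ) (S1 : ℕ → ℕ → ℂ)
    (hBc : egf Bc * (degExp lam (1/2) - degExp lam (-(1/2))) =
      PowerSeries.X * degExp lam x * degCos lam y)
    (hB : egf B * (expS (1/2) - expS (-(1/2))) = PowerSeries.X * expS x)
    (hb : egf b * logS = PowerSeries.X)
    (hS1 : ∀ j, logS ^ j = PowerSeries.C (R := ℂ) (Nat.factorial j) * egf (fun k => S1 k j))
    (n : ℕ) :
    Bc n = ∑ m ∈ Finset.range (n+1), ∑ k ∈ Finset.range (m+1), ∑ l ∈ Finset.range (k/2+1),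
      (n.choose m : ℂ) * (k.choose (2*l) : ℂ) * (-1)^l * (lam:ℂ)^(n-k) * S1 m k *
        b (n-m) * B (k-2*l) * (y:ℂ)^(2*l) := by
  set l : ℂ := (lam : ℂ) with hlam
  set c : ℕ → ℂ := fun k => (1/2:ℂ) * ((Complex.I*(y:ℂ))^k + (-(Complex.I*(y:ℂ)))^k) with hc
  set g : ℕ → ℂ := fun k => ∑ i ∈ Finset.range (k+1), (k.choose i : ℂ) * B i * c (k-i) with hg
  set R : ℕ → ℂ := fun n => ∑ m ∈ Finset.range (n+1),
    (n.choose m : ℂ) * Tf l S1 g m * (l^(n-m) * b (n-m)) with hR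
  have hgf : egf R * (degExp l (1/2) - degExp l (-(1/2)))
      = PowerSeries.X * degExp l x * degCos l y := by
    have e1 : egf R = Phi l S1 g * egf (fun j => l^j * b j) := by
      rw [Phi, egf_mul]
    have hgPhi : Phi l S1 g = Phi l S1 B * Phi l S1 c := (Phi_mul hS1 l B c).symm
    have h1 := key1 hS1 (B := B) (x := (x:ℂ)) l hB
    have h2 := b_fact hb l
    have h3 : Phi l S1 c = degCos l y := (degCos_eq hS1 l (y:ℂ)).symm
    rw [e1, hgPhi]
    linear_combination (Phi l S1 c * egf (fun j => l^j * b j)) * h1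
      + (degExp l x * Phi l S1 c) * h2 + (PowerSeries.X * degExp l x) * h3
  have hDne : degExp l (1/2) - degExp l (-(1/2)) ≠ 0 := by
    intro h
    have h1 := congrArg (PowerSeries.coeff (R := ℂ) 1) h
    rw [map_sub, degExp, degExp, coeff_egf, coeff_egf] at h1
    simp [dff] at h1
  have hegf : egf Bc = egf R := mul_right_cancel₀ hDne (hBc.trans hgf.symm)
  have hfun : Bc = R := egf_inj hegf
  rw [congrFun hfun n]
  -- identify g with the even sum
  have hcodd : ∀ j, ¬ Even j → c j = 0 := by
    intro j hj
    have ho : Odd j := Nat.not_even_iff_odd.mp hj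
    rw [hc]
    simp only
    rw [neg_pow, ho.neg_one_pow]
    ring
  have hceven : ∀ l' : ℕ, c (2*l') = (-1:ℂ)^l' * (y:ℂ)^(2*l') := by
    intro l'
    have hI : (Complex.I*(y:ℂ))^(2*l') = (-1:ℂ)^l' * (y:ℂ)^(2*l') := by
      rw [pow_mul, mul_pow, Complex.I_sq, neg_one_mul, neg_pow, ← pow_mul]
    rw [hc]
    simp only
    rw [Even.neg_pow (even_two_mul l'), hI]
    ring
  have hgk : ∀ k, g k = ∑ l' ∈ Finset.range (k/2+1),
      (k.choose (2*l') : ℂ) * B (k-2*l') * ((-1:ℂ)^l' * (y:ℂ)^(2*l')) := by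
    intro k
    have hrefl : g k = ∑ j ∈ Finset.range (k+1), (k.choose j : ℂ) * B (k-j) * c j := by
      rw [hg]
      simp only
      rw [← Finset.sum_range_reflect (fun j => (k.choose j : ℂ) * B (k-j) * c j) (k+1)]
      refine Finset.sum_congr rfl fun i hi => ?_
      have hik : i ≤ k := Nat.lt_succ_iff.mp (Finset.mem_range.mp hi)
      simp only [Nat.add_sub_cancel]
      rw [Nat.choose_symm hik, Nat.sub_sub_self hik]
    rw [hrefl, even_sum_reindex k _ (fun j hj => by rw [hcodd j hj]; ring)]
    refine Finset.sum_congr rfl fun l' _ => ?_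
    rw [hceven l']
  -- final triple sum
  rw [hR]
  simp only
  refine Finset.sum_congr rfl fun m hm => ?_
  have hmn : m ≤ n := Nat.lt_succ_iff.mp (Finset.mem_range.mp hm)
  simp only [Tf]
  rw [Finset.mul_sum, Finset.sum_mul]
  refine Finset.sum_congr rfl fun k hk => ?_
  have hkm : k ≤ m := Nat.lt_succ_iff.mp (Finset.mem_range.mp hk)
  rw [hgk k, Finset.mul_sum]
  rw [Finset.mul_sum, Finset.sum_mul]
  refine Finset.sum_congr rfl fun l' _ => ?_
  rw [show (l^(n-k) : ℂ) = l^(n-m) * l^(m-k) by rw [← pow_add]; congr 1; omega]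
  ring
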